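/- In the state e^{iθJ_y}|N/2, k⟩, the fourth moment of J_z equals the explicit polynomial expression: (k^2 cos^2θ + (sin^2θ/2)(N^2/4 - k^2 + N/2))^2 + ((2k-1)^2 sin^2θ cos^2θ /4)(N/2-k+1)(N/2+k) + ((2k+1)^2 sin^2θ cos^2θ /4)(N/2+k+1)(N/2-k) + (sin^4θ/16)(N/2-k+1)(N/2-k+2)(N/2+k)(N/2+k-1) + (sin^4θ/16)(N/2-k)(N/2-k-1)(N/2+k+1)(N/2+k+2). -/

import Mathlib

open Matrix Complex

noncomputable def Jplus (N : ℕ) : Matrix (Fin (N + 1)) (Fin (N + 1)) ℂ :=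
  fun i k => if (i : ℕ) = (k : ℕ) + 1 then
      (Real.sqrt ((N / 2 : ℝ) * (N / 2 + 1) - ((k : ℝ) - N / 2) * ((k : ℝ) - N / 2 + 1)) : ℂ)
    else 0

noncomputable def Jminus (N : ℕ) : Matrix (Fin (N + 1)) (Fin (N + 1)) ℂ := (Jplus N)ᴴ

noncomputable def Jy (N : ℕ) : Matrix (Fin (N + 1)) (Fin (N + 1)) ℂ :=
  (2 * Complex.I)⁻¹ • (Jplus N - Jminus N)

noncomputable def Jz (N : ℕ) : Matrix (Fin (N + 1)) (Fin (N + 1)) ℂ :=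
  Matrix.diagonal (fun k => (((k : ℝ) - N / 2 : ℝ) : ℂ))

/-- the radicand function, with a real argument -/
noncomputable def gfun (N : ℕ) (x : ℝ) : ℝ :=
  (N / 2 : ℝ) * (N / 2 + 1) - (x - N / 2) * (x - N / 2 + 1)

/-- square root of the radicand -/
noncomputable def rtf (N : ℕ) (x : ℝ) : ℝ := Real.sqrt (gfun N x)

lemma gfun_neg_one (N : ℕ) : gfun N (-1) = 0 := by unfold gfun; ring

lemma gfun_N (N : ℕ) : gfun N N = 0 := by unfold gfun; ring

lemma rtf_neg_one (N : ℕ) : rtf N (-1) = 0 := by rw [rtf, gfun_neg_one, Real.sqrt_zero]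

lemma rtf_N (N : ℕ) : rtf N N = 0 := by rw [rtf, gfun_N, Real.sqrt_zero]

lemma gfun_nonneg (N : ℕ) {x : ℝ} (h1 : -1 ≤ x) (h2 : x ≤ N) : 0 ≤ gfun N x := by
  unfold gfun
  nlinarith [mul_nonneg (by linarith : (0:ℝ) ≤ (N:ℝ) - x) (by linarith : (0:ℝ) ≤ x + 1)]

lemma rtf_sq (N : ℕ) {x : ℝ} (h1 : -1 ≤ x) (h2 : x ≤ N) : rtf N x * rtf N x = gfun N x :=
  Real.mul_self_sqrt (gfun_nonneg N h1 h2)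

lemma Jplus_apply (N : ℕ) (i x : Fin (N + 1)) :
    Jplus N i x = if (i : ℕ) = (x : ℕ) + 1 then (rtf N ((x : ℕ) : ℝ) : ℂ) else 0 := rfl

lemma Jminus_apply (N : ℕ) (i x : Fin (N + 1)) :
    Jminus N i x = if (x : ℕ) = (i : ℕ) + 1 then (rtf N ((i : ℕ) : ℝ) : ℂ) else 0 := by
  rw [Jminus, conjTranspose_apply, Jplus_apply]
  split_ifs <;> simp


lemma JzJp (N : ℕ) : Jz N * Jplus N = Jplus N * Jz N + Jplus N := by
  ext i x
  rw [Jz, Matrix.diagonal_mul, Matrix.add_apply, Matrix.mul_diagonal, Jplus_apply]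
  split_ifs with h
  · have hx : ((i : ℕ) : ℂ) = ((x : ℕ) : ℂ) + 1 := by exact_mod_cast h
    push_cast
    rw [hx]; ring
  · simp

lemma JzJm (N : ℕ) : Jz N * Jminus N = Jminus N * Jz N - Jminus N := by
  ext i x
  rw [Jz, Matrix.diagonal_mul, Matrix.sub_apply, Matrix.mul_diagonal, Jminus_apply]
  split_ifs with h
  · have hx : ((x : ℕ) : ℂ) = ((i : ℕ) : ℂ) + 1 := by exact_mod_cast h
    push_cast
    rw [hx]; ring
  · simp

lemma JpJm_apply (N : ℕ) (i x : Fin (N + 1)) :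
    (Jplus N * Jminus N) i x =
      if i = x then ((rtf N (((i : ℕ) : ℝ) - 1) * rtf N (((i : ℕ) : ℝ) - 1) : ℝ) : ℂ) else 0 := by
  rw [Matrix.mul_apply]
  by_cases hix : i = x
  · subst hix
    rw [if_pos rfl]
    by_cases hi : 1 ≤ (i : ℕ)
    · rw [Finset.sum_eq_single (⟨(i : ℕ) - 1, by omega⟩ : Fin (N + 1))]
      · rw [Jplus_apply, Jminus_apply]
        rw [if_pos (by simp; omega)]
        simp only [Fin.val_mk]
        push_cast [Nat.cast_sub hi]
        ring
      · intro c _ hc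
        have hcc : ¬ ((i : ℕ) = (c : ℕ) + 1) := by
          intro h; apply hc; apply Fin.ext; simp; omega
        rw [Jplus_apply, if_neg hcc]
        ring
      · intro h; exact absurd (Finset.mem_univ _) h
    · have hi0 : (i : ℕ) = 0 := by omega
      have hz : (∑ c, Jplus N i c * Jminus N c i) = 0 := Finset.sum_eq_zero (fun c _ => by
        rw [Jplus_apply, if_neg (by omega)]; ring)
      rw [hz, hi0]
      norm_num [rtf_neg_one]
  · rw [if_neg hix, Finset.sum_eq_zero]
    intro c _
    rw [Jplus_apply, Jminus_apply]
    by_cases h1 : (i : ℕ) = (c : ℕ) + 1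
    · have h2 : ¬((x : ℕ) = (c : ℕ) + 1) := by
        intro h2; exact hix (Fin.ext (by omega))
      rw [if_neg h2]; ring
    · rw [if_neg h1]; ring

lemma JmJp_apply (N : ℕ) (i x : Fin (N + 1)) :
    (Jminus N * Jplus N) i x =
      if i = x then ((rtf N (((i : ℕ) : ℝ)) * rtf N (((i : ℕ) : ℝ)) : ℝ) : ℂ) else 0 := by
  rw [Matrix.mul_apply]
  by_cases hix : i = x
  · subst hix
    rw [if_pos rfl]
    by_cases hi : (i : ℕ) + 1 ≤ N
    · rw [Finset.sum_eq_single (⟨(i : ℕ) + 1, by omega⟩ : Fin (N + 1))]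
      · rw [Jplus_apply, Jminus_apply]
        rw [if_pos (by simp)]
        push_cast
        ring
      · intro c _ hc
        have hcc : ¬ ((c : ℕ) = (i : ℕ) + 1) := by
          intro h; apply hc; apply Fin.ext; simp; omega
        rw [Jminus_apply, if_neg (by omega), Jplus_apply, if_neg (by omega)]
        ring
      · intro h; exact absurd (Finset.mem_univ _) h
    · have hi0 : (i : ℕ) = N := by omega
      have hz : (∑ c, Jminus N i c * Jplus N c i) = 0 := Finset.sum_eq_zero (fun c _ => by
        rw [Jminus_apply, if_neg (by omega)]; ring)
      rw [hz, hi0]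
      norm_num [rtf_N]
  · rw [if_neg hix, Finset.sum_eq_zero]
    intro c _
    rw [Jplus_apply, Jminus_apply]
    by_cases h1 : (c : ℕ) = (i : ℕ) + 1
    · have h2 : ¬((c : ℕ) = (x : ℕ) + 1) := by
        intro h2; exact hix (Fin.ext (by omega))
      rw [if_neg h2]; ring
    · rw [if_neg (by omega)]; ring

lemma JpJm (N : ℕ) : Jplus N * Jminus N = Jminus N * Jplus N + (2:ℂ) • Jz N := by
  ext i x
  rw [Matrix.add_apply, JpJm_apply, JmJp_apply, Matrix.smul_apply, Jz, Matrix.diagonal_apply]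
  by_cases hix : i = x
  · rw [if_pos hix, if_pos hix, if_pos hix]
    have hle : ((i : ℕ) : ℝ) ≤ (N : ℝ) := by exact_mod_cast Nat.lt_succ_iff.mp i.isLt
    have hge : (0:ℝ) ≤ ((i : ℕ) : ℝ) := by positivity
    rw [rtf_sq N (by linarith) (by linarith), rtf_sq N (by linarith) hle, smul_eq_mul]
    simp only [gfun]
    push_cast
    ring
  · rw [if_neg hix, if_neg hix, if_neg hix]
    simp

noncomputable def Jx (N : ℕ) : Matrix (Fin (N + 1)) (Fin (N + 1)) ℂ :=
  (2:ℂ)⁻¹ • (Jplus N + Jminus N)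

noncomputable def Bm (N : ℕ) : Matrix (Fin (N + 1)) (Fin (N + 1)) ℂ :=
  (2:ℂ)⁻¹ • (Jplus N - Jminus N)

lemma Jy_smul (N : ℕ) (θ : ℝ) : (Complex.I * θ) • Jy N = (θ:ℂ) • Bm N := by
  rw [Jy, Bm, smul_smul, smul_smul]
  congr 1
  field_simp

lemma BWp (N : ℕ) : Bm N * (Jz N + Complex.I • Jx N) =
    (Jz N + Complex.I • Jx N) * Bm N + Complex.I • (Jz N + Complex.I • Jx N) := by
  simp only [Bm, Jx, smul_add, smul_sub, add_mul, mul_add, sub_mul, mul_sub,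
    smul_mul_assoc, mul_smul_comm, smul_smul]
  rw [JzJp, JzJm, JpJm]
  match_scalars <;> simp [div_eq_iff, Complex.ext_iff] <;> try norm_num

lemma BWm (N : ℕ) : Bm N * (Jz N - Complex.I • Jx N) =
    (Jz N - Complex.I • Jx N) * Bm N + (-Complex.I) • (Jz N - Complex.I • Jx N) := by
  simp only [Bm, Jx, smul_add, smul_sub, sub_mul, add_mul, mul_add, mul_sub,
    smul_mul_assoc, mul_smul_comm, smul_smul]
  rw [JzJp, JzJm, JpJm]
  match_scalars <;> simp [div_eq_iff, Complex.ext_iff] <;> try norm_num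

open NormedSpace in
theorem exp_intertwine {m : Type*} [Fintype m] [DecidableEq m]
    (A W C : Matrix m m ℂ) (h : A * W = W * C) :
    exp A * W = W * exp C := by
  letI : SeminormedRing (Matrix m m ℂ) := Matrix.linftyOpSemiNormedRing
  letI : NormedRing (Matrix m m ℂ) := Matrix.linftyOpNormedRing
  letI : NormedAlgebra ℂ (Matrix m m ℂ) := Matrix.linftyOpNormedAlgebra
  have hpow : ∀ n : ℕ, A ^ n * W = W * C ^ n := by
    intro n; induction n with
    | zero => simp
    | succ n ih => rw [pow_succ, pow_succ, mul_assoc, h, ← mul_assoc, ih, mul_assoc]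
  rw [exp_eq_tsum ℂ]; beta_reduce
  calc (∑' n : ℕ, ((Nat.factorial n : ℂ))⁻¹ • A ^ n) * W
      = ∑' n : ℕ, (((Nat.factorial n : ℂ))⁻¹ • A ^ n) * W :=
        ((expSeries_summable' (𝕂 := ℂ) A).tsum_mul_right W).symm
    _ = ∑' n : ℕ, W * (((Nat.factorial n : ℂ))⁻¹ • C ^ n) := by
        congr 1; funext n; rw [smul_mul_assoc, hpow, mul_smul_comm]
    _ = W * ∑' n : ℕ, ((Nat.factorial n : ℂ))⁻¹ • C ^ n :=
        (expSeries_summable' (𝕂 := ℂ) C).tsum_mul_left W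

open NormedSpace in
lemma conj_smul_eig {m : Type*} [Fintype m] [DecidableEq m]
    (A W : Matrix m m ℂ) (lam : ℂ)
    (h : A * W = W * A + lam • W) :
    exp A * W = Complex.exp lam • (W * exp A) := by
  letI : SeminormedRing (Matrix m m ℂ) := Matrix.linftyOpSemiNormedRing
  letI : NormedRing (Matrix m m ℂ) := Matrix.linftyOpNormedRing
  letI : NormedAlgebra ℂ (Matrix m m ℂ) := Matrix.linftyOpNormedAlgebra
  have h2 : A * W = W * (A + lam • (1 : Matrix m m ℂ)) := by
    rw [mul_add, mul_smul_comm, mul_one, h]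
  have h3 := exp_intertwine A W _ h2
  have hc : Commute A (lam • (1 : Matrix m m ℂ)) := (Commute.one_right A).smul_right lam
  have h4 : exp (A + lam • (1 : Matrix m m ℂ)) = Complex.exp lam • exp A := by
    rw [Matrix.exp_add_of_commute A _ hc]
    have h5 : (lam • (1 : Matrix m m ℂ)) = algebraMap ℂ _ lam :=
      (Algebra.algebraMap_eq_smul_one lam).symm
    rw [h5, algebraMap_eq_diagonal, Pi.algebraMap_def, Matrix.exp_diagonal, Complex.exp_eq_exp_ℂ]
    ext i j
    simp [Matrix.mul_diagonal, mul_comm]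
  rw [h3, h4, mul_smul_comm]

open NormedSpace in
lemma exp_conj_mul {m : Type*} [Fintype m] [DecidableEq m]
    (A W : Matrix m m ℂ) (lam : ℂ)
    (h : (-A) * W = W * (-A) + lam • W) :
    exp (-A) * W * exp A = Complex.exp lam • W := by
  have h1 := conj_smul_eig (-A) W lam h
  have hVU : exp (-A) * exp A = 1 := by
    rw [← Matrix.exp_add_of_commute (-A) A ((Commute.refl A).neg_left), neg_add_cancel, NormedSpace.exp_zero]
  rw [h1, smul_mul_assoc, mul_assoc, hVU, mul_one]

open NormedSpace in
lemma conj_Jz (N : ℕ) (θ : ℝ) :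
    exp (-((θ:ℂ) • Bm N)) * Jz N * exp ((θ:ℂ) • Bm N) =
      ((Real.cos θ : ℂ)) • Jz N + ((Real.sin θ : ℂ)) • Jx N := by
  have hWp : (-((θ:ℂ) • Bm N)) * (Jz N + Complex.I • Jx N) =
      (Jz N + Complex.I • Jx N) * (-((θ:ℂ) • Bm N)) + (-(Complex.I * θ)) • (Jz N + Complex.I • Jx N) := by
    simp only [neg_mul, mul_neg, smul_mul_assoc, mul_smul_comm]
    rw [BWp]
    match_scalars <;> ring
  have hWm : (-((θ:ℂ) • Bm N)) * (Jz N - Complex.I • Jx N) =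
      (Jz N - Complex.I • Jx N) * (-((θ:ℂ) • Bm N)) + ((Complex.I * θ)) • (Jz N - Complex.I • Jx N) := by
    simp only [neg_mul, mul_neg, smul_mul_assoc, mul_smul_comm]
    rw [BWm]
    match_scalars <;> ring
  have hp := exp_conj_mul ((θ:ℂ) • Bm N) _ _ hWp
  have hm := exp_conj_mul ((θ:ℂ) • Bm N) _ _ hWm
  have hJz : Jz N = (2⁻¹:ℂ) • ((Jz N + Complex.I • Jx N) + (Jz N - Complex.I • Jx N)) := by
    match_scalars <;> ring
  calc exp (-((θ:ℂ) • Bm N)) * Jz N * exp ((θ:ℂ) • Bm N)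
      = (2⁻¹:ℂ) • (exp (-((θ:ℂ) • Bm N)) * (Jz N + Complex.I • Jx N) * exp ((θ:ℂ) • Bm N))
        + (2⁻¹:ℂ) • (exp (-((θ:ℂ) • Bm N)) * (Jz N - Complex.I • Jx N) * exp ((θ:ℂ) • Bm N)) := by
        conv_lhs => rw [hJz]
        simp only [smul_add, mul_add, add_mul, mul_smul_comm, smul_mul_assoc]
    _ = (2⁻¹:ℂ) • (Complex.exp (-(Complex.I * θ)) • (Jz N + Complex.I • Jx N))
        + (2⁻¹:ℂ) • (Complex.exp ((Complex.I * θ)) • (Jz N - Complex.I • Jx N)) := by rw [hp, hm]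
    _ = ((Real.cos θ : ℂ)) • Jz N + ((Real.sin θ : ℂ)) • Jx N := by
        have he1 : Complex.exp (-(Complex.I * θ)) = Complex.cos θ - Complex.sin θ * Complex.I := by
          rw [show (-(Complex.I * (θ:ℂ))) = (-θ:ℂ) * Complex.I by ring, Complex.exp_mul_I]
          simp [Complex.cos_neg, Complex.sin_neg]
          ring
        have he2 : Complex.exp ((Complex.I * θ)) = Complex.cos θ + Complex.sin θ * Complex.I := by
          rw [show ((Complex.I * (θ:ℂ))) = (θ:ℂ) * Complex.I by ring, Complex.exp_mul_I]
        rw [he1, he2, Complex.ofReal_cos, Complex.ofReal_sin]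
        match_scalars <;>
        first
          | ring1
          | linear_combination (Complex.sin (θ:ℂ)) * Complex.I_sq
          | linear_combination (-(Complex.sin (θ:ℂ))) * Complex.I_sq
          | linear_combination (2 * Complex.sin (θ:ℂ)) * Complex.I_sq
          | linear_combination (-2 * Complex.sin (θ:ℂ)) * Complex.I_sq

/-- generalized basis vector indexed by an integer (zero if out of range) -/
noncomputable def Ev (N : ℕ) (z : ℤ) : Fin (N + 1) → ℂ :=
  fun i => if (i : ℤ) = z then 1 else 0

/-- diagonal coefficient -/
noncomputable def dd (N : ℕ) (θ : ℝ) (z : ℤ) : ℝ := Real.cos θ * ((z : ℝ) - N / 2)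

/-- off-diagonal coefficient for the edge (z, z+1) -/
noncomputable def uu (N : ℕ) (θ : ℝ) (z : ℤ) : ℝ := Real.sin θ / 2 * rtf N (z : ℝ)

lemma Ev_apply (N : ℕ) (z : ℤ) (i : Fin (N+1)) : Ev N z i = if (i : ℤ) = z then 1 else 0 := rfl

lemma act (N : ℕ) (θ : ℝ) (z : ℤ) :
    ((Real.cos θ : ℂ) • Jz N + (Real.sin θ : ℂ) • Jx N) *ᵥ Ev N z =
      ((dd N θ z : ℝ) : ℂ) • Ev N z + ((uu N θ z : ℝ) : ℂ) • Ev N (z + 1)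
        + ((uu N θ (z - 1) : ℝ) : ℂ) • Ev N (z - 1) := by
  funext i
  have hM : ∀ x : Fin (N+1), ((Real.cos θ : ℂ) • Jz N + (Real.sin θ : ℂ) • Jx N) i x =
      (if (i : ℕ) = (x : ℕ) then ((Real.cos θ * (((i:ℕ):ℝ) - N / 2) : ℝ) : ℂ) else 0)
      + (if (i : ℕ) = (x : ℕ) + 1 then ((Real.sin θ / 2 * rtf N ((x:ℕ):ℝ) : ℝ) : ℂ) else 0)
      + (if (x : ℕ) = (i : ℕ) + 1 then ((Real.sin θ / 2 * rtf N ((i:ℕ):ℝ) : ℝ) : ℂ) else 0) := by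
    intro x
    rw [Matrix.add_apply, Matrix.smul_apply, Matrix.smul_apply, Jz, Matrix.diagonal_apply,
      Jx, Matrix.smul_apply, Matrix.add_apply, Jplus_apply, Jminus_apply]
    simp only [Fin.ext_iff]
    split_ifs <;>
      first
        | (exfalso; omega)
        | (simp only [smul_eq_mul]; push_cast; ring)
  rw [Matrix.mulVec, dotProduct]
  simp only [hM, Pi.add_apply, Pi.smul_apply, smul_eq_mul, Ev_apply]
  have hx := i.isLt
  by_cases hz0 : 0 ≤ z
  · by_cases hzN : z ≤ N
    · have hzt : z.toNat < N + 1 := by omega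
      rw [Finset.sum_eq_single (⟨z.toNat, hzt⟩ : Fin (N + 1))]
      · rw [if_pos (show ((((⟨z.toNat, hzt⟩ : Fin (N + 1)) : ℕ) : ℤ) = z) by simp; omega), mul_one]
        simp only [Fin.val_mk]
        have hAr : ((z.toNat : ℕ) : ℝ) = (z : ℝ) := by
          exact_mod_cast congrArg (Int.cast : ℤ → ℝ) (Int.toNat_of_nonneg hz0)
        by_cases h1 : (i:ℕ) = z.toNat
        · rw [if_pos h1, if_neg (by omega), if_neg (by omega), if_pos (by omega),
            if_neg (by omega), if_neg (by omega)]
          have hiz : ((i:ℕ):ℝ) = (z:ℝ) := by rw [← hAr]; exact_mod_cast h1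
          simp only [dd]; rw [hiz]; push_cast; ring
        · by_cases h2 : (i:ℕ) = z.toNat + 1
          · rw [if_neg h1, if_pos h2, if_neg (by omega), if_neg (by omega),
              if_pos (by omega), if_neg (by omega)]
            simp only [uu]; rw [hAr]; push_cast; ring
          · by_cases h3 : z.toNat = (i:ℕ) + 1
            · rw [if_neg h1, if_neg h2, if_pos h3, if_neg (by omega), if_neg (by omega),
                if_pos (by omega)]
              have hir : ((i:ℕ):ℝ) = ((z - 1 : ℤ):ℝ) := by
                have : ((i:ℕ):ℤ) = z - 1 := by omega
                exact_mod_cast congrArg (Int.cast : ℤ → ℝ) this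
              simp only [uu]; rw [hir]; push_cast; ring
            · rw [if_neg h1, if_neg h2, if_neg h3, if_neg (by omega), if_neg (by omega),
                if_neg (by omega)]
              ring
      · intro b _ hb
        have hbv := b.isLt
        have hcon : ¬(((b:ℕ):ℤ) = z) := by
          intro hcon
          apply hb; apply Fin.ext; simp; omega
        rw [if_neg hcon, mul_zero]
      · intro hmem; exact absurd (Finset.mem_univ _) hmem
    · -- z > N
      rw [Finset.sum_eq_zero (fun x _ => by
        have hxv := x.isLt
        rw [if_neg (show ¬(((x:ℕ):ℤ) = z) by omega), mul_zero])]
      by_cases e2 : (i:ℤ) = z - 1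
      · have hz2 : z = (N:ℤ) + 1 := by omega
        subst hz2
        rw [if_neg (by omega), if_neg (by omega), if_pos e2]
        have : uu N θ ((N:ℤ) + 1 - 1) = 0 := by
          rw [uu]
          have : (((N:ℤ) + 1 - 1 : ℤ) : ℝ) = (N : ℝ) := by push_cast; ring
          rw [this, rtf_N, mul_zero]
        rw [this]
        simp
      · rw [if_neg (by omega), if_neg (by omega), if_neg e2]
        ring
  · -- z < 0
    rw [Finset.sum_eq_zero (fun x _ => by
      have hxv := x.isLt
      rw [if_neg (show ¬(((x:ℕ):ℤ) = z) by omega), mul_zero])]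
    by_cases e1 : (i:ℤ) = z + 1
    · have hz1 : z = -1 := by omega
      subst hz1
      rw [if_neg (by omega), if_pos e1, if_neg (by omega)]
      have : uu N θ (-1) = 0 := by
        rw [uu]
        have : (((-1 : ℤ)) : ℝ) = (-1 : ℝ) := by push_cast; ring
        rw [this, rtf_neg_one, mul_zero]
      rw [this]
      simp
    · rw [if_neg (by omega), if_neg e1, if_neg (by omega)]
      ring

theorem rotated_Jz_fourth_moment (N : ℕ) (hN : Even N) (θ : ℝ) (kIdx : Fin (N + 1)) (k : ℝ)
    (hk : k = (kIdx : ℝ) - N / 2) :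
    (NormedSpace.exp (-(Complex.I * θ) • Jy N) * (Jz N * Jz N * Jz N * Jz N) *
        NormedSpace.exp ((Complex.I * θ) • Jy N)) kIdx kIdx =
      (((k ^ 2 * Real.cos θ ^ 2 +
            Real.sin θ ^ 2 / 2 * ((N : ℝ) ^ 2 / 4 - k ^ 2 + N / 2)) ^ 2
        + (2 * k - 1) ^ 2 * Real.sin θ ^ 2 * Real.cos θ ^ 2 / 4 *
            ((N : ℝ) / 2 - k + 1) * ((N : ℝ) / 2 + k)
        + (2 * k + 1) ^ 2 * Real.sin θ ^ 2 * Real.cos θ ^ 2 / 4 *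
            ((N : ℝ) / 2 + k + 1) * ((N : ℝ) / 2 - k)
        + Real.sin θ ^ 4 / 16 *
            ((N : ℝ) / 2 - k + 1) * ((N : ℝ) / 2 - k + 2) *
            ((N : ℝ) / 2 + k) * ((N : ℝ) / 2 + k - 1)
        + Real.sin θ ^ 4 / 16 *
            ((N : ℝ) / 2 - k) * ((N : ℝ) / 2 - k - 1) *
            ((N : ℝ) / 2 + k + 1) * ((N : ℝ) / 2 + k + 2) : ℝ) : ℂ) := by
  have hA1 : (Complex.I * (θ:ℂ)) • Jy N = (θ:ℂ) • Bm N := Jy_smul N θ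
  have hA2 : (-(Complex.I * (θ:ℂ))) • Jy N = -((θ:ℂ) • Bm N) := by rw [neg_smul, hA1]
  rw [hA2, hA1]
  have hUV : NormedSpace.exp ((θ:ℂ) • Bm N) * NormedSpace.exp (-((θ:ℂ) • Bm N)) = 1 := by
    rw [← Matrix.exp_add_of_commute _ _ ((Commute.refl ((θ:ℂ) • Bm N)).neg_right),
      add_neg_cancel, NormedSpace.exp_zero]
  have hkey : ∀ X Y : Matrix (Fin (N+1)) (Fin (N+1)) ℂ,
      (NormedSpace.exp (-((θ:ℂ) • Bm N)) * X * NormedSpace.exp ((θ:ℂ) • Bm N)) *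
      (NormedSpace.exp (-((θ:ℂ) • Bm N)) * Y * NormedSpace.exp ((θ:ℂ) • Bm N)) =
      NormedSpace.exp (-((θ:ℂ) • Bm N)) * (X * Y) * NormedSpace.exp ((θ:ℂ) • Bm N) := by
    intro X Y
    simp only [mul_assoc]
    rw [show NormedSpace.exp ((θ:ℂ) • Bm N) * (NormedSpace.exp (-((θ:ℂ) • Bm N)) *
        (Y * NormedSpace.exp ((θ:ℂ) • Bm N))) = Y * NormedSpace.exp ((θ:ℂ) • Bm N) from by
      rw [← mul_assoc, hUV, one_mul]]
  have h4 : NormedSpace.exp (-((θ:ℂ) • Bm N)) * (Jz N * Jz N * Jz N * Jz N) *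
      NormedSpace.exp ((θ:ℂ) • Bm N) =
      ((Real.cos θ : ℂ) • Jz N + (Real.sin θ : ℂ) • Jx N) *
      (((Real.cos θ : ℂ) • Jz N + (Real.sin θ : ℂ) • Jx N) *
      (((Real.cos θ : ℂ) • Jz N + (Real.sin θ : ℂ) • Jx N) *
      ((Real.cos θ : ℂ) • Jz N + (Real.sin θ : ℂ) • Jx N))) := by
    have e1 : Jz N * Jz N * Jz N * Jz N = (Jz N * Jz N) * (Jz N * Jz N) := by
      rw [mul_assoc (Jz N * Jz N)]
    rw [e1, ← hkey, ← hkey, conj_Jz]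
    simp only [mul_assoc]
  rw [h4]
  have hbasis : ∀ X : Matrix (Fin (N+1)) (Fin (N+1)) ℂ,
      X kIdx kIdx = (X *ᵥ Ev N ((kIdx : ℕ) : ℤ)) kIdx := by
    intro X
    rw [Matrix.mulVec, dotProduct, Finset.sum_eq_single kIdx]
    · rw [Ev_apply, if_pos rfl, mul_one]
    · intro b _ hb
      rw [Ev_apply, if_neg (fun hc => hb (Fin.ext (by omega))), mul_zero]
    · intro h; exact absurd (Finset.mem_univ _) h
  set Q : Matrix (Fin (N+1)) (Fin (N+1)) ℂ := (Real.cos θ : ℂ) • Jz N + (Real.sin θ : ℂ) • Jx N with hQ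
  rw [hbasis (Q * (Q * (Q * Q))), ← Matrix.mulVec_mulVec, ← Matrix.mulVec_mulVec,
    ← Matrix.mulVec_mulVec]
  simp only [hQ, act, Matrix.mulVec_add, Matrix.mulVec_smul]
  simp only [Pi.add_apply, Pi.smul_apply, Ev_apply, smul_eq_mul]
  norm_num
  have c1 : ¬(((kIdx:ℕ):ℤ) = ((kIdx:ℕ):ℤ) - 1) := by omega
  have c2 : ¬(((kIdx:ℕ):ℤ) = ((kIdx:ℕ):ℤ) - 1 - 1) := by omega
  have c3 : ¬(((kIdx:ℕ):ℤ) = ((kIdx:ℕ):ℤ) - 1 - 1 - 1) := by omega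
  have c4 : ¬(((kIdx:ℕ):ℤ) = ((kIdx:ℕ):ℤ) - 1 - 1 - 1 - 1) := by omega
  have c5 : ¬(((kIdx:ℕ):ℤ) = ((kIdx:ℕ):ℤ) + 1 + 1) := by omega
  have c6 : ¬(((kIdx:ℕ):ℤ) = ((kIdx:ℕ):ℤ) + 1 + 1 + 1) := by omega
  have c7 : ¬(((kIdx:ℕ):ℤ) = ((kIdx:ℕ):ℤ) + 1 + 1 + 1 + 1) := by omega
  simp only [c1, c2, c3, c4, c5, c6, c7, if_false, mul_zero, zero_mul, add_zero, zero_add]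
  simp only [dd, uu]
  subst hk
  push_cast
  rw [show ((kIdx:ℕ):ℝ) - 1 - 1 = ((kIdx:ℕ):ℝ) - 2 from by ring]
  have hkN : ((kIdx:ℕ):ℝ) ≤ (N:ℝ) := by exact_mod_cast Nat.lt_succ_iff.mp kIdx.isLt
  have hk0 : (0:ℝ) ≤ ((kIdx:ℕ):ℝ) := by positivity
  have r1 : rtf N ((kIdx:ℕ):ℝ) * rtf N ((kIdx:ℕ):ℝ) = gfun N ((kIdx:ℕ):ℝ) :=
    rtf_sq N (by linarith) hkN
  have r2 : rtf N (((kIdx:ℕ):ℝ) - 1) * rtf N (((kIdx:ℕ):ℝ) - 1) = gfun N (((kIdx:ℕ):ℝ) - 1) :=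
    rtf_sq N (by linarith) (by linarith)
  have r3 : (rtf N ((kIdx:ℕ):ℝ) * rtf N ((kIdx:ℕ):ℝ)) *
      (rtf N (((kIdx:ℕ):ℝ) + 1) * rtf N (((kIdx:ℕ):ℝ) + 1)) =
      gfun N ((kIdx:ℕ):ℝ) * gfun N (((kIdx:ℕ):ℝ) + 1) := by
    by_cases hlt : (kIdx:ℕ) < N
    · have : ((kIdx:ℕ):ℝ) + 1 ≤ (N:ℝ) := by
        have : ((kIdx:ℕ):ℝ) + 1 ≤ ((N:ℕ):ℝ) := by exact_mod_cast Nat.succ_le_of_lt hlt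
        linarith
      rw [r1, rtf_sq N (by linarith) this]
    · have heq : ((kIdx:ℕ):ℝ) = (N:ℝ) := by
        have : (kIdx:ℕ) = N := by omega
        exact_mod_cast this
      rw [r1, heq, gfun_N, zero_mul, zero_mul]
  have r4 : (rtf N (((kIdx:ℕ):ℝ) - 1) * rtf N (((kIdx:ℕ):ℝ) - 1)) *
      (rtf N (((kIdx:ℕ):ℝ) - 2) * rtf N (((kIdx:ℕ):ℝ) - 2)) =
      gfun N (((kIdx:ℕ):ℝ) - 1) * gfun N (((kIdx:ℕ):ℝ) - 2) := by
    by_cases hge : 1 ≤ (kIdx:ℕ)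
    · have h1r : (1:ℝ) ≤ ((kIdx:ℕ):ℝ) := by exact_mod_cast hge
      rw [r2, rtf_sq N (by linarith) (by linarith)]
    · have heq : ((kIdx:ℕ):ℝ) = 0 := by
        have : (kIdx:ℕ) = 0 := by omega
        exact_mod_cast this
      have : ((kIdx:ℕ):ℝ) - 1 = -1 := by rw [heq]; ring
      rw [r2, this, gfun_neg_one, zero_mul, zero_mul]
  simp only [gfun] at r1 r2 r3 r4
  have H1 := congrArg (Complex.ofReal : ℝ → ℂ) r1
  have H2 := congrArg (Complex.ofReal : ℝ → ℂ) r2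
  have H3 := congrArg (Complex.ofReal : ℝ → ℂ) r3
  have H4 := congrArg (Complex.ofReal : ℝ → ℂ) r4
  push_cast at H1 H2 H3 H4
  set cc : ℂ := Complex.cos (θ:ℂ) with hcc
  set ss : ℂ := Complex.sin (θ:ℂ) with hss
  set kv : ℂ := ((kIdx:ℕ):ℂ) with hkv
  set nv : ℂ := ((N:ℕ):ℂ) with hnv
  set a : ℂ := ((rtf N ((kIdx:ℕ):ℝ) : ℝ):ℂ) with ha
  set b : ℂ := ((rtf N (((kIdx:ℕ):ℝ) - 1) : ℝ):ℂ) with hb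
  set a2 : ℂ := ((rtf N (((kIdx:ℕ):ℝ) + 1) : ℝ):ℂ) with ha2
  set b2 : ℂ := ((rtf N (((kIdx:ℕ):ℝ) - 2) : ℝ):ℂ) with hb2
  linear_combination
    ((2 * (cc*(kv - nv/2))^2 + ss^2/4*(a*a + b*b + (nv/2 * (nv/2 + 1) - (kv - nv/2) * (kv - nv/2 + 1)) + (nv/2 * (nv/2 + 1) - (kv - 1 - nv/2) * (kv - 1 - nv/2 + 1)))) * (ss^2/4) + ss^2/4*(cc*(kv - nv/2) + cc*(kv + 1 - nv/2))^2) * H1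
    + ((2 * (cc*(kv - nv/2))^2 + ss^2/4*(a*a + b*b + (nv/2 * (nv/2 + 1) - (kv - nv/2) * (kv - nv/2 + 1)) + (nv/2 * (nv/2 + 1) - (kv - 1 - nv/2) * (kv - 1 - nv/2 + 1)))) * (ss^2/4) + ss^2/4*(cc*(kv - nv/2) + cc*(kv - 1 - nv/2))^2) * H2
    + (ss^4/16) * H3 + (ss^4/16) * H4
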